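/- With m^ε(x) = Σ_{k=2}^∞ u_k/(1-εk)·x^k and V^ε(x) = N·(u_N/α)·x^N - (N+1)·(u_{N+1}/(1-α))·x^{N+1}, where ε^{-1} = N + α with N = ⌊ε^{-1}⌋ and α ∈ (0,1), the difference B^ε = m^ε - V^ε has coefficients bounded uniformly in α: for every υ > 0 there exists δ > 0 (independent of α and N ≥ some N_0) such that |B^ε(x)| ≤ υ for all |x| ≤ δ. -/

import Mathlib

set_option maxHeartbeats 1000000

-- key inequality: for k ∉ {N, N+1}, N ≥ 3, α ∈ (0,1):  N+α ≤ (k+1)|N+α-k|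
lemma aux_key (N k : ℕ) (α : ℝ) (hα0 : 0 < α) (hα1 : α < 1)
    (hk : k ≠ N) (hk2 : k ≠ N + 1) :
    (N : ℝ) + α ≤ ((k : ℝ) + 1) * |(N : ℝ) + α - k| := by
  rcases lt_or_gt_of_ne hk with hlt | hgt
  · -- k < N
    have hkN : (k : ℝ) + 1 ≤ N := by exact_mod_cast hlt
    have hpos : (0 : ℝ) < (N : ℝ) + α - k := by linarith
    rw [abs_of_pos hpos]
    have hk0 : (0 : ℝ) ≤ (k : ℝ) := Nat.cast_nonneg k
    nlinarith [mul_nonneg hk0 (by linarith : (0:ℝ) ≤ (N:ℝ) - k - 1 + α)]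
  · -- k > N, k ≠ N+1 so k ≥ N+2
    have hk2' : N + 2 ≤ k := by omega
    have hkN : (N : ℝ) + 2 ≤ k := by exact_mod_cast hk2'
    have hneg : (N : ℝ) + α - k < 0 := by linarith
    rw [abs_of_neg hneg]
    nlinarith [Nat.cast_nonneg (α := ℝ) N]

lemma aux_geom (B s : ℝ) (hB : 0 ≤ B) (hs0 : 0 ≤ s) (hs : s ≤ 1 / 2)
    (k : ℕ) (hk : 2 ≤ k) :
    B * s ^ k ≤ 4 * B * s ^ 2 * (1 / 2) ^ k := by
  obtain ⟨m, rfl⟩ := Nat.exists_eq_add_of_le hk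
  have h1 : s ^ m ≤ (1 / 2 : ℝ) ^ m := pow_le_pow_left₀ hs0 hs m
  have h2 : (0:ℝ) ≤ B * s ^ 2 := by positivity
  calc B * s ^ (2 + m) = (B * s ^ 2) * s ^ m := by rw [pow_add]; ring
    _ ≤ (B * s ^ 2) * (1/2) ^ m := by exact mul_le_mul_of_nonneg_left h1 h2
    _ = 4 * B * s ^ 2 * (1/2) ^ (2 + m) := by rw [pow_add]; ring

theorem stmt10 (B ρ : ℝ) (hB : 0 < B) (hρ : 0 < ρ) (u : ℕ → ℝ)
    (hu0 : u 0 = 0) (hu1 : u 1 = 0)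
    (hu : ∀ k, 2 ≤ k → |u k| ≤ B / ρ ^ k) :
    ∃ N₀ : ℕ, ∀ υ : ℝ, 0 < υ → ∃ δ > (0 : ℝ), ∀ N : ℕ, N₀ ≤ N →
      ∀ α ∈ Set.Ioo (0 : ℝ) 1, ∀ x : ℝ, |x| ≤ δ →
        |(∑' k : ℕ, u k / (1 - ((N : ℝ) + α)⁻¹ * (k : ℝ)) * x ^ k)
          - ((N : ℝ) * (u N / α) * x ^ N
             - ((N : ℝ) + 1) * (u (N + 1) / (1 - α)) * x ^ (N + 1))| ≤ υ := by
  refine ⟨3, fun υ hυ => ?_⟩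
  have hq : (0:ℝ) < υ / (32 * B) := by positivity
  have hsq : (0:ℝ) < Real.sqrt (υ / (32 * B)) := Real.sqrt_pos.2 hq
  refine ⟨min (ρ / 4) (ρ * Real.sqrt (υ / (32 * B))), lt_min (by positivity) (by positivity), ?_⟩
  intro N hN α hα x hx
  obtain ⟨hα0, hα1⟩ := hα
  have hδ1 : |x| ≤ ρ / 4 := hx.trans (min_le_left _ _)
  have hδ2 : |x| ≤ ρ * Real.sqrt (υ / (32 * B)) := hx.trans (min_le_right _ _)
  have hN3 : (3:ℝ) ≤ (N:ℝ) := by exact_mod_cast hN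
  set A : ℝ := (N : ℝ) + α with hAdef
  have hA0 : (0:ℝ) < A := by linarith
  set s : ℝ := 2 * |x| / ρ with hsdef
  have hs0 : (0:ℝ) ≤ s := by positivity
  have hs12 : s ≤ 1 / 2 := by
    rw [hsdef, div_le_iff₀ hρ]; linarith
  set f : ℕ → ℝ := fun k => u k / (1 - A⁻¹ * k) * x ^ k with hfdef
  set g : ℕ → ℝ := fun k =>
    if k = N then u N * x ^ N else if k = N + 1 then u (N + 1) * x ^ (N + 1) else f k
    with hgdef
  set h : ℕ → ℝ := fun k => f k - g k with hhdef
  -- pointwise bound on g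
  have hub : ∀ k, 2 ≤ k → |u k| * |x| ^ k ≤ B * s ^ k := by
    intro k hk
    have h1 : |u k| * |x| ^ k ≤ B / ρ ^ k * |x| ^ k :=
      mul_le_mul_of_nonneg_right (hu k hk) (by positivity)
    calc |u k| * |x| ^ k ≤ B / ρ ^ k * |x| ^ k := h1
      _ = B * (|x| / ρ) ^ k := by rw [div_pow]; ring
      _ ≤ B * s ^ k := by
          refine mul_le_mul_of_nonneg_left (pow_le_pow_left₀ (by positivity) ?_ k) hB.le
          rw [hsdef]; rw [div_le_div_iff₀ hρ hρ]; nlinarith [abs_nonneg x]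
  have hgb : ∀ k, |g k| ≤ 4 * B * s ^ 2 * (1 / 2) ^ k := by
    intro k
    have hrhs : ∀ k', 2 ≤ k' → B * s ^ k' ≤ 4 * B * s ^ 2 * (1/2) ^ k' :=
      fun k' hk' => aux_geom B s hB.le hs0 hs12 k' hk'
    rcases eq_or_ne k N with hkN | hkN
    · have hg : g k = u k * x ^ k := by
        simp only [hgdef]; rw [if_pos hkN, hkN]
      rw [hg, abs_mul, abs_pow]
      exact (hub k (by omega)).trans (hrhs k (by omega))
    rcases eq_or_ne k (N + 1) with hkN1 | hkN1
    · have hg : g k = u k * x ^ k := by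
        simp only [hgdef]; rw [if_neg hkN, if_pos hkN1, hkN1]
      rw [hg, abs_mul, abs_pow]
      exact (hub k (by omega)).trans (hrhs k (by omega))
    -- generic branch
    have hg : g k = f k := by simp only [hgdef, if_neg hkN, if_neg hkN1]
    rcases Nat.lt_or_ge k 2 with hk2 | hk2
    · -- k = 0 or 1
      interval_cases k <;> simp [hg, hfdef, hu0, hu1] <;> positivity
    · -- 2 ≤ k, k ≠ N, N+1
      have hkey := aux_key N k α hα0 hα1 hkN hkN1
      have hANk : (0:ℝ) < |A - k| := by
        by_contra hcon
        push_neg at hcon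
        have : |A - (k:ℝ)| = 0 := le_antisymm hcon (abs_nonneg _)
        rw [this, mul_zero] at hkey
        linarith
      have hD : (1 - A⁻¹ * k) = (A - k) / A := by field_simp
      have hDabs : |1 - A⁻¹ * (k:ℝ)| = |A - k| / A := by
        rw [hD, abs_div, abs_of_pos hA0]
      have hfk : |f k| = |u k| / |1 - A⁻¹ * (k:ℝ)| * |x| ^ k := by
        simp only [hfdef, abs_mul, abs_div, abs_pow]
      have hquot : |u k| / |1 - A⁻¹ * (k:ℝ)| ≤ ((k:ℝ) + 1) * |u k| := by
        rw [hDabs, div_div_eq_mul_div, div_le_iff₀ hANk]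
        calc |u k| * A ≤ |u k| * (((k:ℝ)+1) * |A - k|) :=
              mul_le_mul_of_nonneg_left hkey (abs_nonneg _)
          _ = ((k:ℝ)+1) * |u k| * |A - k| := by ring
      have hk1 : ((k:ℝ) + 1) ≤ 2 ^ k := by
        exact_mod_cast Nat.succ_le_of_lt (Nat.lt_two_pow_self (n := k))
      calc |g k| = |f k| := by rw [hg]
        _ = |u k| / |1 - A⁻¹ * (k:ℝ)| * |x| ^ k := hfk
        _ ≤ ((k:ℝ) + 1) * |u k| * |x| ^ k :=
            mul_le_mul_of_nonneg_right hquot (by positivity)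
        _ ≤ 2 ^ k * (|u k| * |x| ^ k) := by
            rw [← mul_assoc]
            exact mul_le_mul_of_nonneg_right
              (mul_le_mul_of_nonneg_right hk1 (abs_nonneg _)) (by positivity)
        _ ≤ 2 ^ k * (B * (|x| / ρ) ^ k) := by
            refine mul_le_mul_of_nonneg_left ?_ (by positivity)
            calc |u k| * |x| ^ k ≤ B / ρ ^ k * |x| ^ k :=
                  mul_le_mul_of_nonneg_right (hu k hk2) (by positivity)
              _ = B * (|x| / ρ) ^ k := by rw [div_pow]; ring
        _ = B * s ^ k := by rw [hsdef, div_pow, div_pow, mul_pow]; ring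
        _ ≤ 4 * B * s ^ 2 * (1/2) ^ k := hrhs k hk2
  -- summability
  have hsumb : Summable (fun k : ℕ => 4 * B * s ^ 2 * (1/2 : ℝ) ^ k) :=
    (summable_geometric_of_lt_one (by norm_num) (by norm_num)).mul_left _
  have hgsum : Summable g := by
    refine Summable.of_norm_bounded hsumb ?_
    intro k; rw [Real.norm_eq_abs]; exact hgb k
  have hgabs : Summable (fun k => |g k|) := by
    simpa [Real.norm_eq_abs] using hgsum.abs
  have hhsupp : ∀ k ∉ ({N, N + 1} : Finset ℕ), h k = 0 := by
    intro k hk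
    simp only [Finset.mem_insert, Finset.mem_singleton, not_or] at hk
    simp only [hhdef, hgdef, if_neg hk.1, if_neg hk.2, sub_self]
  have hhsum : Summable h := summable_of_ne_finset_zero hhsupp
  have hfsum : Summable f := by
    have : f = fun k => g k + h k := by funext k; simp [hhdef]
    rw [this]; exact hgsum.add hhsum
  have htsum : (∑' k, f k) = (∑' k, g k) + ∑' k, h k := by
    have : f = fun k => g k + h k := by funext k; simp [hhdef]
    rw [this]; exact Summable.tsum_add hgsum hhsum
  -- tsum h = V
  have hNne : N ≠ N + 1 := by omega
  have hα0' : α ≠ 0 := ne_of_gt hα0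
  have hα1' : (1:ℝ) - α ≠ 0 := by linarith
  have hA0' : A ≠ 0 := ne_of_gt hA0
  have hDN : (1 : ℝ) - A⁻¹ * (N:ℝ) = α / A := by
    rw [hAdef]; field_simp; ring
  have hDN1 : (1 : ℝ) - A⁻¹ * ((N:ℕ):ℝ) = α / A := hDN
  have hhN : h N = (N:ℝ) * (u N / α) * x ^ N := by
    simp only [hhdef, hgdef, hfdef, if_pos rfl, if_pos (rfl : N = N)]
    rw [if_pos trivial]
    rw [hDN]
    field_simp
    try ring
  have hDN2 : (1 : ℝ) - A⁻¹ * ((N:ℝ) + 1) = (α - 1) / A := by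
    rw [hAdef]; field_simp; try ring
  have hhN1 : h (N + 1) = -(((N:ℝ) + 1) * (u (N + 1) / (1 - α)) * x ^ (N + 1)) := by
    simp only [hhdef, hgdef, hfdef, if_neg hNne, if_pos rfl, if_neg (Ne.symm hNne), if_pos (rfl : N + 1 = N + 1)]
    push_cast
    rw [hDN2]
    have hα1'' : α - 1 ≠ 0 := by intro hc; apply hα1'; linarith
    field_simp
    try ring
  have htsumh : (∑' k, h k) = (N:ℝ) * (u N / α) * x ^ N
      - ((N:ℝ) + 1) * (u (N + 1) / (1 - α)) * x ^ (N + 1) := by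
    rw [tsum_eq_sum hhsupp, Finset.sum_pair hNne, hhN, hhN1]
    ring
  -- final estimate
  have hgoal : (∑' k : ℕ, u k / (1 - ((N : ℝ) + α)⁻¹ * (k : ℝ)) * x ^ k)
      - ((N : ℝ) * (u N / α) * x ^ N
        - ((N : ℝ) + 1) * (u (N + 1) / (1 - α)) * x ^ (N + 1)) = ∑' k, g k := by
    have : (∑' k : ℕ, u k / (1 - ((N : ℝ) + α)⁻¹ * (k : ℝ)) * x ^ k) = ∑' k, f k := by
      rfl
    rw [this, htsum, htsumh]; ring
  rw [hgoal]
  have h1 : |∑' k, g k| ≤ ∑' k, |g k| := by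
    have h1' : Summable fun k => ‖g k‖ := by simpa [Real.norm_eq_abs] using hgabs
    simpa [Real.norm_eq_abs] using norm_tsum_le_tsum_norm h1'
  have h2 : (∑' k, |g k|) ≤ ∑' k : ℕ, 4 * B * s ^ 2 * (1/2 : ℝ) ^ k :=
    Summable.tsum_le_tsum hgb hgabs hsumb
  have h3 : (∑' k : ℕ, 4 * B * s ^ 2 * (1/2 : ℝ) ^ k) = 8 * B * s ^ 2 := by
    rw [tsum_mul_left, tsum_geometric_of_lt_one (by norm_num) (by norm_num)]
    norm_num
    ring
  have h4 : 8 * B * s ^ 2 ≤ υ := by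
    have hsle : s ≤ 2 * Real.sqrt (υ / (32 * B)) := by
      rw [hsdef, div_le_iff₀ hρ]
      nlinarith [hδ2, hsq.le]
    have hsq2 : Real.sqrt (υ / (32 * B)) ^ 2 = υ / (32 * B) := Real.sq_sqrt hq.le
    have h5 : s ^ 2 ≤ 4 * (υ / (32 * B)) := by nlinarith [hsle, hs0, hsq2, hsq.le]
    have h6 : 8 * B * (4 * (υ / (32 * B))) = υ := by field_simp; ring
    nlinarith [mul_le_mul_of_nonneg_left h5 (by positivity : (0:ℝ) ≤ 8 * B)]
  linarith [h1.trans (h2.trans_eq h3)]
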